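/- For all m, n ≥ 2, the number of Column's strictly undominated actions U^C(m,n) first-order stochastically dominates U^C(m−1,n): for every k ∈ {1,…,n}, Pr(U^C(m,n) ≤ k) ≤ Pr(U^C(m−1,n) ≤ k), and the inequality is strict for k = 1, where Pr(U^C(m,n) ≤ 1) = n^{−(m−1)}. -/

import Mathlib

open Finset Filter

noncomputable section

/-- Row action `i` is strictly dominated in the restricted game with Row actions `X`
and Column actions `Y`, for Row payoff matrix `R`. -/
def RowDomIn {m n : ℕ} (R : Fin m → Fin n → ℝ) (X : Finset (Fin m)) (Y : Finset (Fin n))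
    (i : Fin m) : Prop :=
  ∃ i' ∈ X, ∀ j ∈ Y, R i j < R i' j

/-- Column action `j` is strictly dominated in the restricted game with Row actions `X`
and Column actions `Y`, for Column payoff matrix `C`. -/
def ColDomIn {m n : ℕ} (C : Fin m → Fin n → ℝ) (X : Finset (Fin m)) (Y : Finset (Fin n))
    (j : Fin n) : Prop :=
  ∃ j' ∈ Y, ∀ i ∈ X, C i j < C i j'

open Classical in
/-- One round of iterated elimination: simultaneously delete every strictly dominated
action of both players in the current restricted game. -/
def elimStep {m n : ℕ} (R C : Fin m → Fin n → ℝ)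
    (p : Finset (Fin m) × Finset (Fin n)) : Finset (Fin m) × Finset (Fin n) :=
  (p.1.filter fun i => ¬ RowDomIn R p.1 p.2 i,
   p.2.filter fun j => ¬ ColDomIn C p.1 p.2 j)

/-- Surviving actions of the subgame `(p.1, p.2)` after iterated elimination of strictly
dominated actions (iterating `m + n` times surely reaches the fixed point). -/
def survivorsFrom {m n : ℕ} (R C : Fin m → Fin n → ℝ)
    (p : Finset (Fin m) × Finset (Fin n)) : Finset (Fin m) × Finset (Fin n) :=
  (elimStep R C)^[m + n] p

/-- The subgame `(p.1, p.2)` is strict-dominance solvable: exactly one action of each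
player survives iterated elimination of strictly dominated actions. -/
def SolvableFrom {m n : ℕ} (R C : Fin m → Fin n → ℝ)
    (p : Finset (Fin m) × Finset (Fin n)) : Prop :=
  (survivorsFrom R C p).1.card = 1 ∧ (survivorsFrom R C p).2.card = 1

/-- Surviving actions of the full game after iterated elimination. -/
def survivors {m n : ℕ} (R C : Fin m → Fin n → ℝ) : Finset (Fin m) × Finset (Fin n) :=
  survivorsFrom R C (Finset.univ, Finset.univ)

/-- The game is strict-dominance solvable. -/
def Solvable {m n : ℕ} (R C : Fin m → Fin n → ℝ) : Prop :=
  SolvableFrom R C (Finset.univ, Finset.univ)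

/-- The number of rounds performed by the iterated elimination procedure:
the least `k` such that round `k + 1` deletes nothing more. -/
def elimRounds {m n : ℕ} (R C : Fin m → Fin n → ℝ) : ℕ :=
  sInf {k | (elimStep R C)^[k + 1] (Finset.univ, Finset.univ)
          = (elimStep R C)^[k] (Finset.univ, Finset.univ)}

/-- Sample space of the random game `G(m,n)`: for each Column action an i.i.d. uniform
permutation giving Row's ordinal payoffs in that column, and for each Row action an
i.i.d. uniform permutation giving Column's ordinal payoffs in that row. -/
abbrev Omega (m n : ℕ) := (Fin n → Equiv.Perm (Fin m)) × (Fin m → Equiv.Perm (Fin n))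

/-- Row's payoff matrix of the realized game. -/
def RPay {m n : ℕ} (ω : Omega m n) : Fin m → Fin n → ℝ := fun i j => ((ω.1 j) i : ℕ)

/-- Column's payoff matrix of the realized game. -/
def CPay {m n : ℕ} (ω : Omega m n) : Fin m → Fin n → ℝ := fun i j => ((ω.2 i) j : ℕ)

/-- Probability of an event under the uniform distribution on `Omega m n`
(i.e. all `m + n` permutations uniform and mutually independent). -/
def Pr {m n : ℕ} (E : Set (Omega m n)) : ℝ :=
  (E.toFinite.toFinset.card : ℝ) / (Fintype.card (Omega m n) : ℝ)

open Classical in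
/-- Number of Row actions that are not strictly dominated. -/
def UR {m n : ℕ} (ω : Omega m n) : ℕ :=
  (Finset.univ.filter fun i => ¬ RowDomIn (RPay ω) Finset.univ Finset.univ i).card

open Classical in
/-- Number of Column actions that are not strictly dominated. -/
def UC {m n : ℕ} (ω : Omega m n) : ℕ :=
  (Finset.univ.filter fun j => ¬ ColDomIn (CPay ω) Finset.univ Finset.univ j).card

/-- Number of Row actions surviving iterated elimination. -/
def SR {m n : ℕ} (ω : Omega m n) : ℕ := (survivors (RPay ω) (CPay ω)).1.card

/-- Number of Column actions surviving iterated elimination. -/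
def SC {m n : ℕ} (ω : Omega m n) : ℕ := (survivors (RPay ω) (CPay ω)).2.card

/-- The realized game is strict-dominance solvable. -/
def GameSolvable {m n : ℕ} (ω : Omega m n) : Prop := Solvable (RPay ω) (CPay ω)

/-- Number of rounds of the iterated elimination procedure in the realized game. -/
def GameRounds {m n : ℕ} (ω : Omega m n) : ℕ := elimRounds (RPay ω) (CPay ω)

/-- `π(m,n)`: probability that the random game `G(m,n)` is strict-dominance solvable. -/
def probSolvable (m n : ℕ) : ℝ := Pr {ω : Omega m n | GameSolvable ω}

/-- Expected number of Column's strictly undominated actions, `E[U^C(m,n)]`. -/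
def expUC (m n : ℕ) : ℝ :=
  (∑ ω : Omega m n, (UC ω : ℝ)) / (Fintype.card (Omega m n) : ℝ)

/-- Expected number of Column actions surviving iterated elimination, `E[S^C(m,n)]`. -/
def expSC (m n : ℕ) : ℝ :=
  (∑ ω : Omega m n, (SC ω : ℝ)) / (Fintype.card (Omega m n) : ℝ)

open Classical in
/-- `E[I(m,n)]`: expected number of elimination rounds conditional on the game being
strict-dominance solvable. -/
def condExpRounds (m n : ℕ) : ℝ :=
  (∑ ω : Omega m n, if GameSolvable ω then (GameRounds ω : ℝ) else 0) /
    (∑ ω : Omega m n, if GameSolvable ω then (1 : ℝ) else 0)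

/-- Unsigned Stirling numbers of the first kind. -/
def stirling1 : ℕ → ℕ → ℕ
  | 0, 0 => 1
  | 0, _ + 1 => 0
  | _ + 1, 0 => 0
  | n + 1, k + 1 => n * stirling1 n (k + 1) + stirling1 n k

end


noncomputable section Aux

open Classical

/-- Number of undominated columns, as a function of the column-player payoff
permutations only. -/
def uCount (m n : ℕ) (τ : Fin m → Equiv.Perm (Fin n)) : ℕ :=
  UC ((fun _ => Equiv.refl (Fin m), τ) : Omega m n)

lemma Pr_comp (m n : ℕ) (p : (Fin m → Equiv.Perm (Fin n)) → Prop) :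
    Pr {ω : Omega m n | p ω.2} =
      ((Finset.univ.filter fun τ => p τ).card : ℝ) /
        (Fintype.card (Fin m → Equiv.Perm (Fin n)) : ℝ) := by
  classical
  have hset : ({ω : Omega m n | p ω.2}).toFinite.toFinset
      = (Finset.univ : Finset (Fin n → Equiv.Perm (Fin m))) ×ˢ
          (Finset.univ.filter fun τ => p τ) := by
    ext ω
    simp [Set.Finite.mem_toFinset, Finset.mem_product]
  have hA : ((Fintype.card (Fin n → Equiv.Perm (Fin m)) : ℝ)) ≠ 0 := by
    exact_mod_cast Fintype.card_ne_zero
  rw [Pr, hset, Finset.card_product, Finset.card_univ]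
  rw [show Fintype.card (Omega m n)
      = Fintype.card (Fin n → Equiv.Perm (Fin m)) *
        Fintype.card (Fin m → Equiv.Perm (Fin n)) from Fintype.card_prod _ _]
  push_cast
  rw [mul_div_mul_left _ _ hA]

lemma uCount_mono (M n : ℕ) (τ : Fin (M+1) → Equiv.Perm (Fin n)) :
    uCount M n (fun i => τ i.castSucc) ≤ uCount (M+1) n τ := by
  classical
  unfold uCount UC
  apply Finset.card_le_card
  intro j hj
  simp only [Finset.mem_filter, Finset.mem_univ, true_and] at hj ⊢
  rintro ⟨j', -, h⟩
  exact hj ⟨j', Finset.mem_univ _, fun i _ => h i.castSucc (Finset.mem_univ _)⟩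

/-- Count of `τ` with at most `k` undominated columns (with the classical
decidability instance, to match `Pr_comp`). -/
def cnt (m n k : ℕ) : ℕ :=
  (@Finset.filter _ (fun τ : Fin m → Equiv.Perm (Fin n) => uCount m n τ ≤ k)
    (fun a => Classical.propDecidable _) Finset.univ).card

lemma count_le (M n k : ℕ) :
    cnt (M+1) n k ≤ cnt M n k * Fintype.card (Equiv.Perm (Fin n)) := by
  classical
  have h := Finset.card_le_card_of_injOn
    (f := fun τ : Fin (M+1) → Equiv.Perm (Fin n) =>
      ((fun i => τ i.castSucc, τ (Fin.last M)) :
        (Fin M → Equiv.Perm (Fin n)) × Equiv.Perm (Fin n)))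
    (s := @Finset.filter _ (fun τ : Fin (M+1) → Equiv.Perm (Fin n) =>
      uCount (M+1) n τ ≤ k) (fun a => Classical.propDecidable _) Finset.univ)
    (t := (@Finset.filter _ (fun τ' : Fin M → Equiv.Perm (Fin n) =>
      uCount M n τ' ≤ k) (fun a => Classical.propDecidable _) Finset.univ) ×ˢ Finset.univ)
    (fun τ hτ => by
      simp only [Finset.mem_filter, Finset.mem_univ, true_and,
        Finset.mem_product, Finset.mem_coe] at hτ ⊢
      exact ⟨le_trans (uCount_mono M n τ) hτ, trivial⟩)
    (fun τ _ τ' _ h => by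
      funext i
      refine Fin.lastCases ?_ (fun i => ?_) i
      · exact congrArg Prod.snd h
      · exact congrFun (congrArg Prod.fst h) i)
  simpa [cnt, Finset.card_product] using h

lemma Pr_mono (M n k : ℕ) :
    Pr {ω : Omega (M+1) n | UC ω ≤ k} ≤ Pr {ω : Omega M n | UC ω ≤ k} := by
  classical
  have e1 := Pr_comp (M+1) n (fun τ => uCount (M+1) n τ ≤ k)
  have e2 := Pr_comp M n (fun τ => uCount M n τ ≤ k)
  show Pr {ω : Omega (M+1) n | uCount (M+1) n ω.2 ≤ k}
      ≤ Pr {ω : Omega M n | uCount M n ω.2 ≤ k}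
  rw [e1, e2, Fintype.card_fun, Fintype.card_fun, Fintype.card_fin, Fintype.card_fin]
  show (cnt (M+1) n k : ℝ) / ((Fintype.card (Equiv.Perm (Fin n)) ^ (M+1) : ℕ) : ℝ)
      ≤ (cnt M n k : ℝ) / ((Fintype.card (Equiv.Perm (Fin n)) ^ M : ℕ) : ℝ)
  have hP : 0 < Fintype.card (Equiv.Perm (Fin n)) := Fintype.card_pos
  have h1 : (0:ℝ) < ((Fintype.card (Equiv.Perm (Fin n)) ^ (M+1) : ℕ) : ℝ) := by
    exact_mod_cast pow_pos hP (M+1)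
  have h2 : (0:ℝ) < ((Fintype.card (Equiv.Perm (Fin n)) ^ M : ℕ) : ℝ) := by
    exact_mod_cast pow_pos hP M
  rw [div_le_div_iff₀ h1 h2]
  have hle1 : ((cnt (M+1) n k : ℕ) : ℝ)
      ≤ (cnt M n k : ℝ) * ((Fintype.card (Equiv.Perm (Fin n)) : ℕ) : ℝ) := by
    exact_mod_cast count_le M n k
  push_cast
  exact le_trans (mul_le_mul_of_nonneg_right hle1 (by positivity)) (le_of_eq (by ring))

lemma uCount_le_one_iff (m n : ℕ) (hm : 1 ≤ m) (hn : 1 ≤ n)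
    (τ : Fin m → Equiv.Perm (Fin n)) :
    uCount m n τ ≤ 1 ↔ ∃ j : Fin n, ∀ i : Fin m, τ i j = ⟨n-1, by omega⟩ := by
  classical
  set t : Fin n := ⟨n-1, by omega⟩ with ht
  constructor
  · intro hle
    have key : ∀ i : Fin m, ¬ ColDomIn
        (CPay ((fun _ => Equiv.refl (Fin m), τ) : Omega m n))
        Finset.univ Finset.univ ((τ i)⁻¹ t) := by
      rintro i ⟨j', -, h⟩
      have h2 := h i (Finset.mem_univ i)
      have h3 : ((τ i ((τ i)⁻¹ t) : ℕ) : ℝ) < ((τ i j' : ℕ) : ℝ) := h2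
      rw [Equiv.Perm.inv_def, Equiv.apply_symm_apply] at h3
      have h4 : (t : ℕ) < (τ i j' : ℕ) := by exact_mod_cast h3
      have h5 : (τ i j' : ℕ) < n := (τ i j').isLt
      simp only [ht] at h4
      omega
    have hmem : ∀ i : Fin m, (τ i)⁻¹ t ∈
        (Finset.univ.filter fun j => ¬ ColDomIn
          (CPay ((fun _ => Equiv.refl (Fin m), τ) : Omega m n))
          Finset.univ Finset.univ j) := by
      intro i
      simp only [Finset.mem_filter, Finset.mem_univ, true_and]
      exact key i
    have i0 : Fin m := ⟨0, by omega⟩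
    refine ⟨(τ i0)⁻¹ t, fun i => ?_⟩
    have heq : (τ i)⁻¹ t = (τ i0)⁻¹ t :=
      Finset.card_le_one.1 (by unfold uCount UC at hle; exact hle) _ (hmem i) _ (hmem i0)
    rw [← heq, Equiv.Perm.inv_def, Equiv.apply_symm_apply]
  · rintro ⟨j, hj⟩
    unfold uCount UC
    refine le_trans (Finset.card_le_card ?_) (le_of_eq (Finset.card_singleton j))
    intro j' hj'
    simp only [Finset.mem_filter, Finset.mem_univ, true_and] at hj'
    simp only [Finset.mem_singleton]
    by_contra hne
    apply hj'
    refine ⟨j, Finset.mem_univ _, fun i _ => ?_⟩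
    show ((τ i j' : ℕ) : ℝ) < ((τ i j : ℕ) : ℝ)
    have h1 : τ i j' ≠ t := by
      rw [← hj i]
      exact fun h => hne ((τ i).injective h)
    have h2 : (τ i j' : ℕ) ≠ n - 1 := fun h => h1 (Fin.ext h)
    have h3 : (τ i j' : ℕ) < n := (τ i j').isLt
    have : (τ i j' : ℕ) < (τ i j : ℕ) := by rw [hj i]; simp only [ht]; omega
    exact_mod_cast this

lemma fiber_card (n : ℕ) (j k : Fin n) (a b : Fin n) :
    (Finset.univ.filter fun σ : Equiv.Perm (Fin n) => σ j = a).card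
      = (Finset.univ.filter fun σ : Equiv.Perm (Fin n) => σ k = b).card := by
  classical
  apply Finset.card_bij' (fun σ _ => Equiv.swap a b * σ * Equiv.swap k j)
    (fun σ _ => Equiv.swap a b * σ * Equiv.swap k j)
  · intro σ hσ
    simp only [Finset.mem_filter, Finset.mem_univ, true_and] at hσ ⊢
    simp [Equiv.Perm.mul_apply, hσ]
  · intro σ hσ
    simp only [Finset.mem_filter, Finset.mem_univ, true_and] at hσ ⊢
    simp [Equiv.Perm.mul_apply, hσ, Equiv.swap_apply_right]
  · intro σ _
    simp [mul_assoc, ← mul_assoc]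
  · intro σ _
    simp [mul_assoc, ← mul_assoc]

lemma fiber_mul (n : ℕ) (j : Fin n) (a : Fin n) :
    (Finset.univ.filter fun σ : Equiv.Perm (Fin n) => σ j = a).card * n
      = Fintype.card (Equiv.Perm (Fin n)) := by
  classical
  have h := Finset.card_eq_sum_card_fiberwise
    (f := fun σ : Equiv.Perm (Fin n) => σ j)
    (s := (Finset.univ : Finset (Equiv.Perm (Fin n))))
    (t := (Finset.univ : Finset (Fin n)))
    (fun σ _ => Finset.mem_univ _)
  rw [← Finset.card_univ, h,
    Finset.sum_congr rfl (fun b _ => fiber_card n j j b a)]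
  simp [Finset.card_univ, mul_comm]

lemma big_count (m n : ℕ) (hm : 1 ≤ m) (t : Fin n) :
    (Finset.univ.filter fun τ : Fin m → Equiv.Perm (Fin n) =>
        ∃ j, ∀ i, τ i j = t).card
      = n * (Finset.univ.filter fun σ : Equiv.Perm (Fin n) => σ t = t).card ^ m := by
  classical
  have hS : (Finset.univ.filter fun τ : Fin m → Equiv.Perm (Fin n) =>
        ∃ j, ∀ i, τ i j = t)
      = Finset.univ.biUnion (fun j : Fin n =>
          Finset.univ.filter fun τ : Fin m → Equiv.Perm (Fin n) => ∀ i, τ i j = t) := by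
    ext τ
    simp [Finset.mem_biUnion]
  rw [hS, Finset.card_biUnion]
  · have hpiece : ∀ j : Fin n,
        (Finset.univ.filter fun τ : Fin m → Equiv.Perm (Fin n) => ∀ i, τ i j = t).card
        = (Finset.univ.filter fun σ : Equiv.Perm (Fin n) => σ t = t).card ^ m := by
      intro j
      have he : (Finset.univ.filter fun τ : Fin m → Equiv.Perm (Fin n) => ∀ i, τ i j = t)
          = Fintype.piFinset (fun _ : Fin m =>
              Finset.univ.filter fun σ : Equiv.Perm (Fin n) => σ j = t) := by
        ext τ
        simp [Fintype.mem_piFinset]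
      rw [he, Fintype.card_piFinset]
      rw [Finset.prod_congr rfl (fun i _ => fiber_card n j t t t)]
      simp
    rw [Finset.sum_congr rfl (fun j _ => hpiece j)]
    simp [Finset.card_univ, mul_comm]
  · intro j _ j' _ hjj'
    rw [Function.onFun, Finset.disjoint_left]
    intro τ h1 h2
    simp only [Finset.mem_filter, Finset.mem_univ, true_and] at h1 h2
    have i0 : Fin m := ⟨0, by omega⟩
    exact hjj' ((τ i0).injective ((h1 i0).trans (h2 i0).symm))

lemma Pr_le_one_eq (m n : ℕ) (hm : 1 ≤ m) (hn : 1 ≤ n) :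
    Pr {ω : Omega m n | UC ω ≤ 1} = 1 / (n : ℝ) ^ (m - 1) := by
  classical
  obtain ⟨M, rfl⟩ : ∃ M, m = M + 1 := ⟨m - 1, by omega⟩
  set t : Fin n := ⟨n - 1, by omega⟩ with ht
  have e1 := Pr_comp (M+1) n (fun τ => uCount (M+1) n τ ≤ 1)
  show Pr {ω : Omega (M+1) n | uCount (M+1) n ω.2 ≤ 1} = 1 / (n : ℝ) ^ (M + 1 - 1)
  rw [e1, Fintype.card_fun, Fintype.card_fin]
  show (cnt (M+1) n 1 : ℝ) / ((Fintype.card (Equiv.Perm (Fin n)) ^ (M+1) : ℕ) : ℝ)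
      = 1 / (n : ℝ) ^ (M + 1 - 1)
  set c : ℕ := (Finset.univ.filter fun σ : Equiv.Perm (Fin n) => σ t = t).card with hcdef
  have e2 : cnt (M+1) n 1 = n * c ^ (M+1) := by
    have hflt : (@Finset.filter _ (fun τ : Fin (M+1) → Equiv.Perm (Fin n) =>
          uCount (M+1) n τ ≤ 1) (fun a => Classical.propDecidable _) Finset.univ)
        = Finset.univ.filter (fun τ : Fin (M+1) → Equiv.Perm (Fin n) =>
            ∃ j, ∀ i, τ i j = t) := by
      ext τ
      simp only [Finset.mem_filter, Finset.mem_univ, true_and]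
      exact uCount_le_one_iff (M+1) n (by omega) hn τ
    rw [cnt, hflt, big_count (M+1) n (by omega) t]
  have hc : c * n = Fintype.card (Equiv.Perm (Fin n)) := fiber_mul n t t
  have hc0 : 0 < c := by
    rcases Nat.eq_zero_or_pos c with h | h
    · exfalso
      have hpos := Fintype.card_pos (α := Equiv.Perm (Fin n))
      rw [← hc, h, zero_mul] at hpos
      exact lt_irrefl 0 hpos
    · exact h
  rw [e2, ← hc]
  have hn0 : (0:ℝ) < (n:ℝ) := by exact_mod_cast hn
  have hc0' : (0:ℝ) < (c:ℝ) := by exact_mod_cast hc0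
  simp only [Nat.add_sub_cancel]
  have hd1 : (0:ℝ) < (((c * n) ^ (M+1) : ℕ) : ℝ) := by
    exact_mod_cast pow_pos (Nat.mul_pos hc0 (by omega)) (M+1)
  have hd2 : (0:ℝ) < (n:ℝ) ^ M := pow_pos hn0 M
  rw [div_eq_div_iff hd1.ne' hd2.ne']
  push_cast
  ring

end Aux

/-- For all `m, n ≥ 2`, `U^C(m,n)` first-order stochastically dominates
`U^C(m−1,n)`: for every `k ∈ {1,…,n}`, `Pr(U^C(m,n) ≤ k) ≤ Pr(U^C(m−1,n) ≤ k)`, strictly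
for `k = 1`, where `Pr(U^C(m,n) ≤ 1) = n^(−(m−1))`. -/
theorem stmt10 (m n : ℕ) (hm : 2 ≤ m) (hn : 2 ≤ n) :
    (∀ k ∈ Finset.Icc 1 n,
      Pr {ω : Omega m n | UC ω ≤ k} ≤ Pr {ω : Omega (m - 1) n | UC ω ≤ k}) ∧
    Pr {ω : Omega m n | UC ω ≤ 1} < Pr {ω : Omega (m - 1) n | UC ω ≤ 1} ∧
    Pr {ω : Omega m n | UC ω ≤ 1} = 1 / (n : ℝ) ^ (m - 1) := by
  classical
  obtain ⟨M, rfl⟩ : ∃ M, m = M + 1 := ⟨m - 1, by omega⟩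
  have hM : 1 ≤ M := by omega
  refine ⟨fun k _ => Pr_mono M n k, ?_, ?_⟩
  · show Pr {ω : Omega (M+1) n | UC ω ≤ 1} < Pr {ω : Omega M n | UC ω ≤ 1}
    rw [Pr_le_one_eq (M+1) n (by omega) (by omega), Pr_le_one_eq M n hM (by omega)]
    simp only [Nat.add_sub_cancel]
    have hn1 : (1:ℝ) < (n:ℝ) := by exact_mod_cast hn
    apply one_div_lt_one_div_of_lt
    · exact pow_pos (by linarith) (M - 1)
    · exact pow_lt_pow_right₀ hn1 (by omega)
  · exact Pr_le_one_eq (M+1) n (by omega) (by omega)
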